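/- If gcd(n/d, r/d) = 1 with d = gcd(n,r), then 1 + q^d + q^{2d} + ... + q^{(n/d - 1)d} ≡ 1 + q^r + q^{2r} + ... + q^{(n/d - 1)r} (mod q^n - 1). -/

import Mathlib

/-- If `gcd(n/d, r/d) = 1` with `d = gcd(n,r)`, then
`1 + q^d + ⋯ + q^{(n/d-1)d} ≡ 1 + q^r + ⋯ + q^{(n/d-1)r} (mod q^n - 1)`. -/
theorem stmt_4 (q n r : ℕ) (hq : 2 ≤ q) (hn : 0 < n) (hr : 0 < r)
    (d : ℕ) (hd : d = Nat.gcd n r) (hco : Nat.gcd (n / d) (r / d) = 1) :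
    (∑ i ∈ Finset.range (n / d), q ^ (i * d)) ≡
      (∑ i ∈ Finset.range (n / d), q ^ (i * r)) [MOD q ^ n - 1] := by
  have hd0 : 0 < d := hd ▸ Nat.gcd_pos_of_pos_left r hn
  have hdn : d ∣ n := hd ▸ Nat.gcd_dvd_left n r
  have hdr : d ∣ r := hd ▸ Nat.gcd_dvd_right n r
  set m := n / d with hm
  set r' := r / d with hr'
  have hmd : m * d = n := Nat.div_mul_cancel hdn
  have hrd : r' * d = r := Nat.div_mul_cancel hdr
  have hm0 : 0 < m := Nat.div_pos (Nat.le_of_dvd hn hdn) hd0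
  rcases eq_or_lt_of_le (show 1 ≤ m from hm0) with h1 | h1
  · rw [← h1]; simp; rfl
  have hco' : Nat.Coprime r' m := Nat.Coprime.symm hco
  obtain ⟨s, -, hs⟩ := Nat.exists_mul_mod_eq_one_of_coprime hco' h1
  rw [← ZMod.natCast_eq_natCast_iff]
  push_cast
  set N := q ^ n - 1 with hNdef
  set Q : ZMod N := (q : ZMod N) with hQ
  have hQn : Q ^ n = 1 := by
    have h2 : ((q ^ n : ℕ) : ZMod N) = ((1 : ℕ) : ZMod N) := by
      rw [ZMod.natCast_eq_natCast_iff]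
      exact ((Nat.modEq_iff_dvd' (Nat.one_le_pow _ _ (by omega))).mpr dvd_rfl).symm
    simpa [hQ] using h2
  have hx : (Q ^ d) ^ m = 1 := by rw [← pow_mul, mul_comm d m, hmd, hQn]
  have step : ∀ i : ℕ, Q ^ (i * r) = (Q ^ d) ^ (i * r' % m) := by
    intro i
    rw [← pow_eq_pow_mod _ hx, ← pow_mul, mul_comm d, mul_assoc, hrd]
  have step2 : ∀ i : ℕ, Q ^ (i * d) = (Q ^ d) ^ i := by
    intro i; rw [← pow_mul, mul_comm d i]
  calc (∑ i ∈ Finset.range m, Q ^ (i * d))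
      = ∑ i ∈ Finset.range m, (Q ^ d) ^ i := by
        exact Finset.sum_congr rfl fun i _ => step2 i
    _ = ∑ i ∈ Finset.range m, (Q ^ d) ^ (i * r' % m) := by
        refine Finset.sum_nbij' (fun a => a * s % m) (fun b => b * r' % m)
          (fun a _ => Finset.mem_range.mpr (Nat.mod_lt _ hm0))
          (fun b _ => Finset.mem_range.mpr (Nat.mod_lt _ hm0))
          (fun a ha => ?_) (fun b hb => ?_) (fun a ha => ?_)
        · rw [Finset.mem_range] at ha
          show a * s % m * r' % m = a
          rw [Nat.mod_mul_mod, mul_right_comm, mul_assoc, Nat.mul_mod, hs, mul_one,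
            Nat.mod_mod_of_dvd _ dvd_rfl, Nat.mod_eq_of_lt ha]
        · rw [Finset.mem_range] at hb
          show b * r' % m * s % m = b
          rw [Nat.mod_mul_mod, mul_assoc, Nat.mul_mod, hs, mul_one,
            Nat.mod_mod_of_dvd _ dvd_rfl, Nat.mod_eq_of_lt hb]
        · rw [Finset.mem_range] at ha
          congr 1
          show a = a * s % m * r' % m
          rw [Nat.mod_mul_mod, mul_right_comm, mul_assoc, Nat.mul_mod, hs, mul_one,
            Nat.mod_mod_of_dvd _ dvd_rfl, Nat.mod_eq_of_lt ha]
    _ = ∑ i ∈ Finset.range m, Q ^ (i * r) := by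
        exact Finset.sum_congr rfl fun i _ => (step i).symm
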